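/- Let ε > 0 and let P ⊂ [0,1)² be an ε-separated set (with respect to dist_H) with #P ≥ C·ε^{-2} for some C > 0, and let μ = (1/#P)·∑_{p∈P} δ_p. Then for every dyadic rectangle R with |R| ≥ ε², the average ⟨μ⟩_R = μ(R)/|R| satisfies ⟨μ⟩_R ≤ 2/C. -/

import Mathlib

open MeasureTheory
open scoped ENNReal

/-- A dyadic interval `[k·2^n, (k+1)·2^n)`. -/
def IsDyadicInterval (I : Set ℝ) : Prop :=
  ∃ k n : ℤ, I = Set.Ico ((k : ℝ) * 2 ^ n) (((k : ℝ) + 1) * 2 ^ n)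

/-- An axis-parallel dyadic rectangle in the plane. -/
def IsDyadicRect (R : Set (ℝ × ℝ)) : Prop :=
  ∃ I J : Set ℝ, IsDyadicInterval I ∧ IsDyadicInterval J ∧ R = I ×ˢ J

/-- `dist_H(p,q) = inf { |R|^{1/2} : R dyadic rectangle containing p and q }`. -/
noncomputable def distH (p q : ℝ × ℝ) : ℝ≥0∞ :=
  sInf {v | ∃ R : Set (ℝ × ℝ), IsDyadicRect R ∧ p ∈ R ∧ q ∈ R ∧ v = volume R ^ (1 / 2 : ℝ)}

def unitSq : Set (ℝ × ℝ) := Set.Ico (0 : ℝ) 1 ×ˢ Set.Ico (0 : ℝ) 1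

lemma vol_rect (a b c d : ℝ) :
    volume (Set.Ico a b ×ˢ Set.Ico c d) = ENNReal.ofReal (b-a) * ENNReal.ofReal (d-c) := by
  rw [show (volume : Measure (ℝ×ℝ)) = (volume : Measure ℝ).prod volume from rfl,
    Measure.prod_prod, Real.volume_Ico, Real.volume_Ico]

lemma distH_le {p q : ℝ × ℝ} {R : Set (ℝ × ℝ)} (hR : IsDyadicRect R)
    (hp : p ∈ R) (hq : q ∈ R) : distH p q ≤ volume R ^ (1/2 : ℝ) :=
  sInf_le ⟨R, hR, hp, hq, rfl⟩

/-- If `P ⊆ [0,1)²` is `ε`-separated with `#P ≥ C·ε^{-2}` and `μ` is the uniform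
probability measure on `P`, then `⟨μ⟩_R ≤ 2/C` for every dyadic rectangle `R` with
`|R| ≥ ε²`. -/
theorem stmt6 (ε C : ℝ) (hε : 0 < ε) (hC : 0 < C)
    (P : Finset (ℝ × ℝ)) (hPsub : (↑P : Set (ℝ × ℝ)) ⊆ unitSq)
    (hsep : ∀ p ∈ P, ∀ q ∈ P, p ≠ q → ENNReal.ofReal ε ≤ distH p q)
    (hcard : C * ε⁻¹ ^ 2 ≤ (P.card : ℝ)) :
    ∀ R : Set (ℝ × ℝ), IsDyadicRect R → ENNReal.ofReal (ε ^ 2) ≤ volume R →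
      (((P.card : ℝ≥0∞))⁻¹ • ∑ p ∈ P, Measure.dirac p) R / volume R ≤
        ENNReal.ofReal (2 / C) := by
  intro R hRdy hvol
  obtain ⟨I, J, ⟨k, n, hI⟩, ⟨l, w, hJ⟩, hRIJ⟩ := hRdy
  subst hI hJ hRIJ
  -- volume of R
  have hvolR : volume (Set.Ico ((k:ℝ) * 2 ^ n) (((k:ℝ) + 1) * 2 ^ n) ×ˢ
      Set.Ico ((l:ℝ) * 2 ^ w) (((l:ℝ) + 1) * 2 ^ w)) = ENNReal.ofReal ((2:ℝ) ^ (n + w)) := by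
    have e1 : ((k:ℝ)+1) * 2 ^ n - (k:ℝ) * 2 ^ n = 2 ^ n := by ring
    have e2 : ((l:ℝ)+1) * 2 ^ w - (l:ℝ) * 2 ^ w = 2 ^ w := by ring
    rw [vol_rect, e1, e2, ← ENNReal.ofReal_mul (by positivity),
      ← zpow_add₀ (by norm_num : (2:ℝ) ≠ 0)]
  rw [hvolR] at hvol ⊢
  have h2nw : (0:ℝ) < 2 ^ (n + w) := by positivity
  have hε2v : ε ^ 2 ≤ 2 ^ (n + w) := by
    rwa [ENNReal.ofReal_le_ofReal_iff h2nw.le] at hvol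
  -- choose m with 2^m < ε² ≤ 2^(m+1)
  obtain ⟨m, hm1, hm2⟩ := exists_mem_Ioc_zpow (show (0:ℝ) < ε ^ 2 by positivity)
    (show (1:ℝ) < 2 by norm_num)
  have hmlt : m < n + w := by
    rw [← zpow_lt_zpow_iff_right₀ (show (1:ℝ) < 2 by norm_num)]
    exact lt_of_lt_of_le hm1 hε2v
  set u : ℕ := (n + w - m).toNat with hu_def
  have hu : (u : ℤ) = n + w - m := Int.toNat_of_nonneg (by omega)
  set δ : ℝ := 2 ^ (n - (u:ℤ)) with hδ_def
  have hδpos : 0 < δ := by positivity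
  have h2n : (2:ℝ) ^ n = 2 ^ (u:ℤ) * δ := by
    rw [hδ_def, ← zpow_add₀ (by norm_num : (2:ℝ) ≠ 0)]; ring_nf
  have h2u : ((2:ℝ) ^ (u:ℤ)) = (2:ℝ) ^ u := zpow_natCast 2 u
  set f : ℝ × ℝ → ℤ := fun p => ⌊p.1 / δ⌋ with hf_def
  set s : Finset (ℝ × ℝ) := P.filter (· ∈ Set.Ico ((k:ℝ) * 2 ^ n) (((k:ℝ) + 1) * 2 ^ n) ×ˢ
    Set.Ico ((l:ℝ) * 2 ^ w) (((l:ℝ) + 1) * 2 ^ w)) with hs_def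
  -- floor facts
  have hJdy : IsDyadicInterval (Set.Ico ((l:ℝ) * 2 ^ w) (((l:ℝ) + 1) * 2 ^ w)) := ⟨l, w, rfl⟩
  have hfloor1 : ∀ x : ℝ, x ∈ Set.Ico (((f (x, 0) : ℤ):ℝ) * δ) ((((f (x, 0) : ℤ):ℝ) + 1) * δ) := by
    intro x
    constructor
    · calc ((⌊x / δ⌋ : ℤ):ℝ) * δ ≤ (x / δ) * δ := by
            exact mul_le_mul_of_nonneg_right (Int.floor_le _) hδpos.le
        _ = x := div_mul_cancel₀ x hδpos.ne'
    · calc x = (x / δ) * δ := (div_mul_cancel₀ x hδpos.ne').symm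
        _ < ((⌊x / δ⌋ : ℝ) + 1) * δ := by
            exact mul_lt_mul_of_pos_right (Int.lt_floor_add_one _) hδpos
  have hfeq : ∀ p : ℝ × ℝ, f p = f (p.1, 0) := fun p => rfl
  have hrange : ∀ p : ℝ × ℝ, p.1 ∈ Set.Ico ((k:ℝ) * 2 ^ n) (((k:ℝ) + 1) * 2 ^ n) →
      f p ∈ Finset.Ico (k * 2 ^ u) (k * 2 ^ u + 2 ^ u) := by
    intro p hp
    obtain ⟨h1, h2⟩ := hp
    rw [Finset.mem_Ico]
    constructor
    · rw [Int.le_floor]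
      rw [le_div_iff₀ hδpos]
      calc ((k * 2 ^ u : ℤ) : ℝ) * δ = (k:ℝ) * ((2:ℝ) ^ (u:ℤ) * δ) := by
            push_cast [h2u]; ring
        _ = (k:ℝ) * 2 ^ n := by rw [← h2n]
        _ ≤ p.1 := h1
    · rw [Int.floor_lt, div_lt_iff₀ hδpos]
      calc p.1 < ((k:ℝ) + 1) * 2 ^ n := h2
        _ = ((k * 2 ^ u + 2 ^ u : ℤ) : ℝ) * δ := by
            rw [h2n]; push_cast [h2u]; ring
  -- injectivity
  have hinj : Set.InjOn f ↑s := by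
    intro p hp q hq hfpq
    by_contra hne
    simp only [hs_def, Finset.coe_filter, Set.mem_setOf_eq] at hp hq
    set j : ℤ := f p with hj_def
    set R' : Set (ℝ × ℝ) := Set.Ico ((j:ℝ) * δ) (((j:ℝ) + 1) * δ) ×ˢ
      Set.Ico ((l:ℝ) * 2 ^ w) (((l:ℝ) + 1) * 2 ^ w) with hR'_def
    have hR'dy : IsDyadicRect R' := ⟨_, _, ⟨j, n - (u:ℤ), by rw [hδ_def]⟩, hJdy, rfl⟩
    have hpR' : p ∈ R' := by
      refine ⟨?_, hp.2.2⟩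
      have := hfloor1 p.1
      rwa [← hfeq p, ← hj_def] at this
    have hqR' : q ∈ R' := by
      refine ⟨?_, hq.2.2⟩
      have := hfloor1 q.1
      rwa [← hfeq q, ← hfpq] at this
    have hvolR' : volume R' = ENNReal.ofReal ((2:ℝ) ^ m) := by
      have e1 : ((j:ℝ)+1) * δ - (j:ℝ) * δ = δ := by ring
      have e2 : ((l:ℝ)+1) * 2 ^ w - (l:ℝ) * 2 ^ w = 2 ^ w := by ring
      rw [hR'_def, vol_rect, e1, e2, hδ_def,
        ← ENNReal.ofReal_mul (by positivity), ← zpow_add₀ (by norm_num : (2:ℝ) ≠ 0)]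
      congr 2
      omega
    have hle := distH_le hR'dy hpR' hqR'
    rw [hvolR', ENNReal.ofReal_rpow_of_pos (by positivity)] at hle
    have hsmall : ((2:ℝ) ^ m) ^ (1/2 : ℝ) < ε := by
      calc ((2:ℝ) ^ m) ^ (1/2 : ℝ) < (ε ^ 2) ^ (1/2 : ℝ) :=
            Real.rpow_lt_rpow (by positivity) hm1 (by norm_num)
        _ = ε := by
            rw [← Real.rpow_natCast ε 2, ← Real.rpow_mul hε.le]
            norm_num
    have hsep' := hsep p hp.1 q hq.1 hne
    have : ENNReal.ofReal ε ≤ ENNReal.ofReal (((2:ℝ) ^ m) ^ (1/2 : ℝ)) := hsep'.trans hle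
    rw [ENNReal.ofReal_le_ofReal_iff (by positivity)] at this
    exact absurd this (not_le.mpr hsmall)
  -- cardinality bound
  have hcard_s : s.card ≤ 2 ^ u := by
    have hmaps : ∀ p ∈ s, f p ∈ Finset.Ico (k * 2 ^ u) (k * 2 ^ u + 2 ^ u) := by
      intro p hp
      simp only [hs_def, Finset.mem_filter] at hp
      exact hrange p hp.2.1
    have := Finset.card_le_card_of_injOn f hmaps hinj
    have hIcocard : (Finset.Ico (k * 2 ^ u) (k * 2 ^ u + 2 ^ u)).card = 2 ^ u := by
      rw [Int.card_Ico]
      simp only [add_sub_cancel_left]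
      rw [show ((2:ℤ) ^ u) = ((2 ^ u : ℕ) : ℤ) by push_cast; ring, Int.toNat_natCast]
    rwa [hIcocard] at this
  -- measure of R
  have hmeas : MeasurableSet (Set.Ico ((k:ℝ) * 2 ^ n) (((k:ℝ) + 1) * 2 ^ n) ×ˢ
      Set.Ico ((l:ℝ) * 2 ^ w) (((l:ℝ) + 1) * 2 ^ w)) :=
    measurableSet_Ico.prod measurableSet_Ico
  have hμ : (((P.card : ℝ≥0∞))⁻¹ • ∑ p ∈ P, Measure.dirac p)
      (Set.Ico ((k:ℝ) * 2 ^ n) (((k:ℝ) + 1) * 2 ^ n) ×ˢ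
       Set.Ico ((l:ℝ) * 2 ^ w) (((l:ℝ) + 1) * 2 ^ w)) =
      ((P.card : ℝ≥0∞))⁻¹ * (s.card : ℝ≥0∞) := by
    rw [Measure.smul_apply, Measure.finset_sum_apply, smul_eq_mul]
    congr 1
    rw [hs_def]
    simp only [Measure.dirac_apply' _ hmeas, Set.indicator_apply, Pi.one_apply]
    rw [Finset.sum_boole]
  rw [hμ]
  -- positivity facts
  have hPpos : 0 < P.card := by
    by_contra h
    push_neg at h
    interval_cases hc : P.card
    · simp only [Nat.cast_zero] at hcard
      nlinarith [pow_pos (inv_pos.mpr hε) 2]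
  have hPnn : (0:ℝ) ≤ (P.card : ℝ) := Nat.cast_nonneg _
  -- reduce to a real inequality
  rw [ENNReal.div_le_iff_le_mul (Or.inl (by positivity)) (Or.inl ENNReal.ofReal_ne_top),
    ← ENNReal.div_eq_inv_mul,
    ENNReal.div_le_iff_le_mul (Or.inl (by exact_mod_cast hPpos.ne'))
      (Or.inl (ENNReal.natCast_ne_top _))]
  rw [show ((s.card : ℝ≥0∞)) = ENNReal.ofReal (s.card : ℝ) by rw [ENNReal.ofReal_natCast],
    show ((P.card : ℝ≥0∞)) = ENNReal.ofReal (P.card : ℝ) by rw [ENNReal.ofReal_natCast],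
    ← ENNReal.ofReal_mul (by positivity), ← ENNReal.ofReal_mul (by positivity)]
  apply ENNReal.ofReal_le_ofReal
  -- the real inequality
  have hsN : (s.card : ℝ) ≤ (2:ℝ) ^ u := by exact_mod_cast hcard_s
  have hT : (2:ℝ) ^ u * 2 ^ m = 2 ^ (n + w) := by
    rw [← h2u, ← zpow_add₀ (by norm_num : (2:ℝ) ≠ 0)]
    congr 1
    omega
  have hPc : C / ε ^ 2 ≤ (P.card : ℝ) := by
    rw [div_eq_mul_inv, ← inv_pow]
    exact hcard
  have hCle : C ≤ ε ^ 2 * (P.card : ℝ) := by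
    have := (div_le_iff₀ (by positivity : (0:ℝ) < ε ^ 2)).mp hPc
    linarith
  have h2m : (0:ℝ) < 2 ^ m := by positivity
  have hupos : (0:ℝ) < (2:ℝ) ^ u := by positivity
  have main : (2:ℝ) ^ u * C ≤ 2 * 2 ^ (n + w) * (P.card : ℝ) := by
    calc (2:ℝ) ^ u * C ≤ 2 ^ u * (ε ^ 2 * (P.card : ℝ)) := by nlinarith
      _ ≤ 2 ^ u * ((2 * 2 ^ m) * (P.card : ℝ)) := by
          have h1 : ε ^ 2 * (P.card : ℝ) ≤ (2 * 2 ^ m) * (P.card : ℝ) := by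
            apply mul_le_mul_of_nonneg_right _ hPnn
            calc ε ^ 2 ≤ 2 ^ (m + 1) := hm2
              _ = 2 * 2 ^ m := by rw [zpow_add₀ (by norm_num : (2:ℝ) ≠ 0)]; ring
          nlinarith
      _ = 2 * 2 ^ (n + w) * (P.card : ℝ) := by rw [← hT]; ring
  rw [div_mul_eq_mul_div, div_mul_eq_mul_div, le_div_iff₀ hC]
  calc (s.card : ℝ) * C ≤ (2:ℝ) ^ u * C := by nlinarith
    _ ≤ 2 * 2 ^ (n + w) * (P.card : ℝ) := main
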